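/- arXiv:1912.06633 — 3 statements merged into one kernel-verified Lean document; each statement's English description precedes it below -/
import Mathlib

section
/- For every real x > 0, with m := tanh(x)/x and p := (1 − tanh(x)² + m)/2, the following chain of inequalities holds: 0 < m², m² < p, p < m, m < min{1, 2p}, min{1,2p} ≤ 2p, and 2p < (1+p)·m. -/
open Real

/-- If `f 0 = 0` and `f` has positive derivative on `(0, ∞)`, then `f` is positive there. -/
lemma aux_pos {f f' : ℝ → ℝ} (hd : ∀ y, HasDerivAt f (f' y) y)
    (h0 : f 0 = 0) (hpos : ∀ y, 0 < y → 0 < f' y) {x : ℝ} (hx : 0 < x) : 0 < f x := by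
  have hmono : StrictMonoOn f (Set.Ici 0) := by
    apply strictMonoOn_of_deriv_pos (convex_Ici 0)
    · exact fun y _ => (hd y).continuousAt.continuousWithinAt
    · intro y hy
      rw [interior_Ici] at hy
      rw [(hd y).deriv]
      exact hpos y hy
  have := hmono (Set.self_mem_Ici) (Set.mem_Ici.mpr hx.le) hx
  rw [h0] at this
  exact this

/-- `sinh y < y cosh y` for `y > 0`. -/
lemma aux_h {x : ℝ} (hx : 0 < x) : Real.sinh x < x * Real.cosh x := by
  have key : ∀ y : ℝ, 0 < y → (0:ℝ) < y * Real.sinh y :=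
    fun y hy => mul_pos hy (Real.sinh_pos_iff.mpr hy)
  have h : (0:ℝ) < x * Real.cosh x - Real.sinh x :=
    aux_pos (f := fun y => y * Real.cosh y - Real.sinh y)
      (f' := fun y => y * Real.sinh y)
      (fun y => by
        have := ((hasDerivAt_id y).mul (Real.hasDerivAt_cosh y)).sub (Real.hasDerivAt_sinh y)
        exact this.congr_deriv (by simp [id_eq]))
      (by simp) key hx
  linarith

/-- `F x = x² + x sinh x cosh x - 2 sinh² x > 0` for `x > 0`. -/
lemma aux_F {x : ℝ} (hx : 0 < x) :
    0 < x ^ 2 + x * Real.sinh x * Real.cosh x - 2 * Real.sinh x ^ 2 := by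
  have key1 : ∀ y : ℝ, 0 < y → (0:ℝ) < 2 + (Real.cosh y ^ 2 + y * (2 * Real.cosh y * Real.sinh y))
      + (Real.sinh y ^ 2 + y * (2 * Real.sinh y * Real.cosh y))
      - 3 * (Real.cosh y * Real.cosh y + Real.sinh y * Real.sinh y) := by
    intro y hy
    have hp := Real.cosh_sq_sub_sinh_sq y
    have hs := Real.sinh_pos_iff.mpr hy
    have hh := aux_h hy
    nlinarith [mul_pos hs (sub_pos.mpr hh)]
  have h1 : ∀ y : ℝ, 0 < y →
      (0:ℝ) < 2 * y + y * Real.cosh y ^ 2 + y * Real.sinh y ^ 2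
        - 3 * Real.sinh y * Real.cosh y := by
    intro z hz
    exact aux_pos (f := fun y => 2 * y + y * Real.cosh y ^ 2 + y * Real.sinh y ^ 2
        - 3 * Real.sinh y * Real.cosh y)
      (f' := fun y => 2 + (Real.cosh y ^ 2 + y * (2 * Real.cosh y * Real.sinh y))
        + (Real.sinh y ^ 2 + y * (2 * Real.sinh y * Real.cosh y))
        - 3 * (Real.cosh y * Real.cosh y + Real.sinh y * Real.sinh y))
      (fun y => by
        have := ((((hasDerivAt_const y 2).mul (hasDerivAt_id y)).add
            ((hasDerivAt_id y).mul ((Real.hasDerivAt_cosh y).pow 2))).add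
            ((hasDerivAt_id y).mul ((Real.hasDerivAt_sinh y).pow 2))).sub
            ((((hasDerivAt_const y 3).mul (Real.hasDerivAt_sinh y)).mul (Real.hasDerivAt_cosh y)))
        exact this.congr_deriv (by simp [id_eq]; ring))
      (by simp) key1 hz
  have key2 : ∀ y : ℝ, 0 < y → (0:ℝ) < 2 * y + ((Real.sinh y + y * Real.cosh y) * Real.cosh y
      + y * Real.sinh y * Real.sinh y) - 2 * (2 * Real.sinh y * Real.cosh y) := by
    intro y hy
    have := h1 y hy
    nlinarith
  exact aux_pos (f := fun y => y ^ 2 + y * Real.sinh y * Real.cosh y - 2 * Real.sinh y ^ 2)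
    (f' := fun y => 2 * y + ((Real.sinh y + y * Real.cosh y) * Real.cosh y
      + y * Real.sinh y * Real.sinh y) - 2 * (2 * Real.sinh y * Real.cosh y))
    (fun y => by
      have := (((hasDerivAt_pow 2 y).add
          (((hasDerivAt_id y).mul (Real.hasDerivAt_sinh y)).mul (Real.hasDerivAt_cosh y))).sub
          (((hasDerivAt_const y 2).mul ((Real.hasDerivAt_sinh y).pow 2))))
      exact this.congr_deriv (by simp [id_eq]))
    (by simp) key2 hx

/-- `G x = x sinh x + sinh² x cosh x - 2 x² cosh x > 0` for `x > 0`. -/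
lemma aux_G {x : ℝ} (hx : 0 < x) :
    0 < x * Real.sinh x + Real.sinh x ^ 2 * Real.cosh x - 2 * x ^ 2 * Real.cosh x := by
  have key1 : ∀ y : ℝ, 0 < y →
      (0:ℝ) < (3 * Real.cosh y * Real.cosh y ^ 2
        + 3 * Real.sinh y * (2 * Real.cosh y * Real.sinh y))
        - (3 * Real.cosh y + 3 * y * Real.sinh y)
        - (2 * (2 * y) * Real.sinh y + 2 * y ^ 2 * Real.cosh y) := by
    intro y hy
    have hp := Real.cosh_sq_sub_sinh_sq y
    have hs := Real.sinh_pos_iff.mpr hy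
    have hsl := Real.self_lt_sinh_iff.mpr hy
    have hc := Real.one_le_cosh y
    nlinarith [mul_pos hs (sub_pos.mpr hsl), mul_nonneg (mul_pos hs hs).le (sub_nonneg.mpr hc),
      mul_pos hy hs, sq_nonneg (Real.sinh y - y)]
  have h1 : ∀ y : ℝ, 0 < y →
      (0:ℝ) < 3 * Real.sinh y * Real.cosh y ^ 2 - 3 * y * Real.cosh y
        - 2 * y ^ 2 * Real.sinh y := by
    intro z hz
    exact aux_pos (f := fun y => 3 * Real.sinh y * Real.cosh y ^ 2 - 3 * y * Real.cosh y
        - 2 * y ^ 2 * Real.sinh y)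
      (f' := fun y => (3 * Real.cosh y * Real.cosh y ^ 2
        + 3 * Real.sinh y * (2 * Real.cosh y * Real.sinh y))
        - (3 * Real.cosh y + 3 * y * Real.sinh y)
        - (2 * (2 * y) * Real.sinh y + 2 * y ^ 2 * Real.cosh y))
      (fun y => by
        have := ((((hasDerivAt_const y 3).mul (Real.hasDerivAt_sinh y)).mul
            ((Real.hasDerivAt_cosh y).pow 2)).sub
            (((hasDerivAt_const y 3).mul (hasDerivAt_id y)).mul (Real.hasDerivAt_cosh y))).sub
            (((hasDerivAt_const y 2).mul (hasDerivAt_pow 2 y)).mul (Real.hasDerivAt_sinh y))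
        exact this.congr_deriv (by simp [id_eq]))
      (by simp) key1 hz
  have key2 : ∀ y : ℝ, 0 < y → (0:ℝ) < (Real.sinh y + y * Real.cosh y)
      + ((2 * Real.sinh y * Real.cosh y) * Real.cosh y + Real.sinh y ^ 2 * Real.sinh y)
      - (2 * (2 * y) * Real.cosh y + 2 * y ^ 2 * Real.sinh y) := by
    intro y hy
    have := h1 y hy
    have hp := Real.cosh_sq_sub_sinh_sq y
    have hp3 : Real.sinh y ^ 3 = Real.sinh y * Real.cosh y ^ 2 - Real.sinh y := by
      linear_combination (-Real.sinh y) * hp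
    nlinarith
  exact aux_pos (f := fun y => y * Real.sinh y + Real.sinh y ^ 2 * Real.cosh y
      - 2 * y ^ 2 * Real.cosh y)
    (f' := fun y => (Real.sinh y + y * Real.cosh y)
      + ((2 * Real.sinh y * Real.cosh y) * Real.cosh y + Real.sinh y ^ 2 * Real.sinh y)
      - (2 * (2 * y) * Real.cosh y + 2 * y ^ 2 * Real.sinh y))
    (fun y => by
      have := (((hasDerivAt_id y).mul (Real.hasDerivAt_sinh y)).add
          (((Real.hasDerivAt_sinh y).pow 2).mul (Real.hasDerivAt_cosh y))).sub
          (((hasDerivAt_const y 2).mul (hasDerivAt_pow 2 y)).mul (Real.hasDerivAt_cosh y))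
      exact this.congr_deriv (by simp [id_eq]))
    (by simp) key2 hx

/-- For every real `x > 0`, with `m := tanh x / x` and
`p := (1 - tanh x ^ 2 + m) / 2`, one has
`0 < m² < p < m < min 1 (2p) ≤ 2p < (1+p)·m`. -/
theorem stmt0 (x m p : ℝ) (hx : 0 < x)
    (hm : m = Real.tanh x / x)
    (hp : p = (1 - Real.tanh x ^ 2 + m) / 2) :
    0 < m ^ 2 ∧ m ^ 2 < p ∧ p < m ∧ m < min 1 (2 * p) ∧ min 1 (2 * p) ≤ 2 * p ∧
      2 * p < (1 + p) * m := by
  set a := Real.sinh x with ha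
  set b := Real.cosh x with hb
  have hb0 : 0 < b := Real.cosh_pos x
  have hs0 : 0 < a := Real.sinh_pos_iff.mpr hx
  have hxa : x < a := Real.self_lt_sinh_iff.mpr hx
  have hb1 : 1 ≤ b := Real.one_le_cosh x
  have hpyth : b ^ 2 - a ^ 2 = 1 := Real.cosh_sq_sub_sinh_sq x
  have hab : a < x * b := aux_h hx
  have hF := aux_F hx
  have hG := aux_G hx
  have hm2 : m = a / (x * b) := by
    rw [hm, Real.tanh_eq_sinh_div_cosh, div_div, mul_comm]
  have hp2 : p = (x + a * b) / (2 * x * b ^ 2) := by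
    rw [hp, hm2, Real.tanh_eq_sinh_div_cosh]
    field_simp
    rw [← ha, ← hb]
    linear_combination (x * b ^ 2) * hpyth
  have hm0 : 0 < m := by rw [hm2]; positivity
  refine ⟨by positivity, ?_, ?_, ?_, min_le_right _ _, ?_⟩
  · rw [hm2, hp2, div_pow, div_lt_div_iff₀ (by positivity) (by positivity)]
    nlinarith [mul_pos (mul_pos hx (pow_pos hb0 2)) hF, mul_pos hx hb0]
  · rw [hm2, hp2, div_lt_div_iff₀ (by positivity) (by positivity)]
    nlinarith [mul_pos (mul_pos hx hb0) (mul_pos hs0 (sub_pos.mpr hxa)),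
      mul_nonneg (mul_nonneg (mul_pos hx hx).le hb0.le) (mul_nonneg hs0.le (sub_nonneg.mpr hb1))]
  · refine lt_min ?_ ?_
    · rw [hm2, div_lt_one (by positivity)]
      exact hab
    · have h2p : 2 * p = (x + a * b) / (x * b ^ 2) := by rw [hp2]; field_simp
      rw [hm2, h2p, div_lt_div_iff₀ (by positivity) (by positivity)]
      nlinarith [mul_pos hx (mul_pos hx hb0)]
  · have h2p : 2 * p = (x + a * b) / (x * b ^ 2) := by rw [hp2]; field_simp
    have h1p : (1 + p) * m = a * (2 * x * b ^ 2 + x + a * b) / (2 * x ^ 2 * b ^ 3) := by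
      rw [hp2, hm2]; field_simp; ring
    rw [h2p, h1p, div_lt_div_iff₀ (by positivity) (by positivity)]
    nlinarith [mul_pos (mul_pos hx (pow_pos hb0 2)) hG, mul_pos hx hb0]
end

section
/- For every real x > 0, every real λ > 0, and every integer N ≥ 2, one has p_N·λ < ln(1 + p_N·(e^λ − 1)) < G_N/N < p_N·λ + (1 − p_N)·N·λ²/2. -/
open Real Set

-- tanh x < x for x > 0
lemma tanh_lt_self {x : ℝ} (hx : 0 < x) : Real.tanh x < x := by
  have key : StrictMonoOn (fun t : ℝ => t * Real.cosh t - Real.sinh t) (Ici 0) := by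
    apply strictMonoOn_of_deriv_pos (convex_Ici 0)
    · exact ((continuous_id.mul Real.continuous_cosh).sub Real.continuous_sinh).continuousOn
    · intro t ht
      rw [interior_Ici, mem_Ioi] at ht
      have hd : HasDerivAt (fun t : ℝ => t * Real.cosh t - Real.sinh t)
          (1 * Real.cosh t + t * Real.sinh t - Real.cosh t) t :=
        ((hasDerivAt_id t).mul (Real.hasDerivAt_cosh t)).sub (Real.hasDerivAt_sinh t)
      rw [hd.deriv]
      have := Real.sinh_pos_iff.2 ht
      nlinarith
  have h0 := key (self_mem_Ici) (mem_Ici.2 hx.le) hx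
  simp only [Real.cosh_zero, Real.sinh_zero, mul_one, zero_mul, sub_zero] at h0
  rw [Real.tanh_eq_sinh_div_cosh, div_lt_iff₀ (Real.cosh_pos x)]
  linarith

lemma tanh_pos' {x : ℝ} (hx : 0 < x) : 0 < Real.tanh x := by
  rw [Real.tanh_eq_sinh_div_cosh]
  exact div_pos (Real.sinh_pos_iff.2 hx) (Real.cosh_pos x)

lemma tanh_lt_one' (x : ℝ) : Real.tanh x < 1 := by
  rw [Real.tanh_eq_sinh_div_cosh, div_lt_one (Real.cosh_pos x)]
  nlinarith [Real.cosh_sub_sinh x, Real.exp_pos (-x)]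

lemma key_log_lt {c : ℝ} (hc0 : 0 < c) (hc1 : c < 1) {t : ℝ} (ht : 0 < t) :
    Real.log (1 - c + c * Real.exp t) < c * t + (1 - c) * t ^ 2 / 2 := by
  set g : ℝ → ℝ := fun s => c * s + (1 - c) * s ^ 2 / 2 - Real.log (1 - c + c * Real.exp s)
    with hg
  have hD : ∀ s : ℝ, 0 < 1 - c + c * Real.exp s := fun s => by
    have := Real.exp_pos s; nlinarith
  have hmono : StrictMonoOn g (Ici 0) := by
    apply strictMonoOn_of_deriv_pos (convex_Ici 0)
    · apply Continuous.continuousOn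
      apply Continuous.sub
      · continuity
      · exact Continuous.log (by continuity) fun s => (hD s).ne'
    · intro s hs
      rw [interior_Ici, mem_Ioi] at hs
      have h2 : HasDerivAt (fun u : ℝ => u ^ 2) (2 * s) s := by
        simpa using hasDerivAt_pow 2 s
      have hpoly : HasDerivAt (fun u : ℝ => c * u + (1 - c) * u ^ 2 / 2)
          (c + (1 - c) * s) s := by
        have := ((hasDerivAt_id s).const_mul c).add (((h2.const_mul (1 - c)).div_const 2))
        exact this.congr_deriv (by ring)
      have hinner : HasDerivAt (fun u : ℝ => 1 - c + c * Real.exp u) (c * Real.exp s) s :=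
        ((Real.hasDerivAt_exp s).const_mul c).const_add (1 - c)
      have hlog := hinner.log (hD s).ne'
      have hd : HasDerivAt g (c + (1 - c) * s - c * Real.exp s / (1 - c + c * Real.exp s)) s :=
        hpoly.sub hlog
      rw [hd.deriv, sub_pos, div_lt_iff₀ (hD s)]
      have hone : (1 - s) * Real.exp s < 1 := by
        have h := Real.add_one_lt_exp (neg_ne_zero.mpr hs.ne')
        calc (1 - s) * Real.exp s < Real.exp (-s) * Real.exp s :=
              mul_lt_mul_of_pos_right (by linarith) (Real.exp_pos s)
          _ = 1 := by rw [← Real.exp_add]; simp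
      have hA : 0 < (1 - c) * (1 - c) * s :=
        mul_pos (mul_pos (sub_pos.2 hc1) (sub_pos.2 hc1)) hs
      have hB : 0 < c * (1 - c) * (1 - (1 - s) * Real.exp s) :=
        mul_pos (mul_pos hc0 (sub_pos.2 hc1)) (by linarith)
      nlinarith [hA, hB]
  have h0 : g 0 = 0 := by simp [hg]
  have := hmono self_mem_Ici (mem_Ici.2 ht.le) ht
  rw [h0] at this
  simp only [hg] at this
  linarith



/-- For every `x > 0`, `λ > 0` and integer `N ≥ 2`, with
`m := tanh x / x`, `p := (1 - tanh x ^ 2 + m)/2`, `p_N := p + (1-p)/N` and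
`G_N := ln(1 + p_N (e^{Nλ} - 1))`, one has
`p_N λ < ln(1 + p_N (e^λ - 1)) < G_N / N < p_N λ + (1 - p_N) N λ² / 2`. -/
theorem stmt1 (x lam : ℝ) (hx : 0 < x) (hlam : 0 < lam) (N : ℕ) (hN : 2 ≤ N)
    (m p pN GN : ℝ)
    (hm : m = Real.tanh x / x)
    (hp : p = (1 - Real.tanh x ^ 2 + m) / 2)
    (hpN : pN = p + (1 - p) / N)
    (hGN : GN = Real.log (1 + pN * (Real.exp (N * lam) - 1))) :
    pN * lam < Real.log (1 + pN * (Real.exp lam - 1)) ∧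
    Real.log (1 + pN * (Real.exp lam - 1)) < GN / N ∧
    GN / N < pN * lam + (1 - pN) * N * lam ^ 2 / 2 := by
  have hNR : (2 : ℝ) ≤ (N : ℝ) := by exact_mod_cast hN
  have hN0 : (0 : ℝ) < (N : ℝ) := by linarith
  have hm1 : m < 1 := by rw [hm, div_lt_one hx]; exact tanh_lt_self hx
  have hm0 : 0 < m := by rw [hm]; exact div_pos (tanh_pos' hx) hx
  have hp0 : 0 < p := by rw [hp]; nlinarith [tanh_pos' hx, tanh_lt_one' x]
  have hp1 : p < 1 := by rw [hp]; nlinarith [tanh_pos' hx, tanh_lt_one' x]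
  have hpN0 : 0 < pN := by
    rw [hpN]; have : 0 < (1 - p) / N := div_pos (by linarith) hN0; linarith
  have hpN1 : pN < 1 := by
    rw [hpN]
    have : (1 - p) / N < 1 - p := div_lt_self (by linarith) (by linarith)
    linarith
  have hq0 : 0 < 1 - pN := by linarith
  -- part 1
  have h1 : Real.exp (pN * lam) < 1 + pN * (Real.exp lam - 1) := by
    have := strictConvexOn_exp.2 (mem_univ (0 : ℝ)) (mem_univ lam) hlam.ne hq0 hpN0
      (by ring)
    simp only [smul_eq_mul, mul_zero, zero_add, Real.exp_zero, mul_one] at this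
    nlinarith [this]
  have hpos1 : 0 < 1 + pN * (Real.exp lam - 1) := lt_trans (Real.exp_pos _) h1
  have part1 : pN * lam < Real.log (1 + pN * (Real.exp lam - 1)) :=
    (Real.lt_log_iff_exp_lt hpos1).2 h1
  -- part 2
  have hApos : 0 < 1 - pN + pN * Real.exp lam := by nlinarith [Real.exp_pos lam]
  have hconv := (strictConvexOn_pow hN).2 (mem_Ici.2 (zero_le_one))
      (mem_Ici.2 (Real.exp_pos lam).le)
      (ne_of_lt (by simpa using Real.one_lt_exp_iff.2 hlam)) hq0 hpN0 (by ring)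
  simp only [smul_eq_mul, mul_one, one_pow] at hconv
  have hEN : (Real.exp lam) ^ N = Real.exp (N * lam) := (Real.exp_nat_mul lam N).symm
  have hconv' : (1 - pN + pN * Real.exp lam) ^ N < 1 + pN * (Real.exp (N * lam) - 1) := by
    rw [hEN] at hconv; nlinarith [hconv]
  have hlog2 : (N : ℝ) * Real.log (1 - pN + pN * Real.exp lam) < GN := by
    rw [hGN, ← Real.log_pow]
    exact Real.log_lt_log (pow_pos hApos N) hconv'
  have hrw : 1 + pN * (Real.exp lam - 1) = 1 - pN + pN * Real.exp lam := by ring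
  have part2 : Real.log (1 + pN * (Real.exp lam - 1)) < GN / N := by
    rw [hrw, lt_div_iff₀ hN0]; linarith [hlog2]
  -- part 3
  have hkey := key_log_lt hpN0 hpN1 (t := (N : ℝ) * lam) (by positivity)
  have part3 : GN / N < pN * lam + (1 - pN) * N * lam ^ 2 / 2 := by
    rw [hGN, div_lt_iff₀ hN0]
    have hrw2 : 1 + pN * (Real.exp (N * lam) - 1) = 1 - pN + pN * Real.exp (N * lam) := by
      ring
    rw [hrw2]
    calc Real.log (1 - pN + pN * Real.exp (↑N * lam))
        < pN * ((N : ℝ) * lam) + (1 - pN) * ((N : ℝ) * lam) ^ 2 / 2 := hkey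
      _ = (pN * lam + (1 - pN) * N * lam ^ 2 / 2) * N := by ring
  exact ⟨part1, part2, part3⟩
end

section
/- For every integer N ≥ 2 and all reals β, v > 0 and b > 0, if βb < λ·((N−1)/N − √(8/(πλ))), then k(λ) − λ/N − ln(cosh(βb)) > 0. -/
open MeasureTheory ProbabilityTheory Real Filter
open Set Topology
open scoped ENNReal NNReal


lemma log_cosh_le_abs (t : ℝ) : Real.log (Real.cosh t) ≤ |t| := by
  have h : Real.cosh t ≤ Real.exp |t| := by
    rw [Real.cosh_eq]
    have h1 : Real.exp t ≤ Real.exp |t| := Real.exp_le_exp.2 (le_abs_self t)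
    have h2 : Real.exp (-t) ≤ Real.exp |t| := Real.exp_le_exp.2 (neg_le_abs t)
    linarith
  calc Real.log (Real.cosh t) ≤ Real.log (Real.exp |t|) :=
        Real.log_le_log (Real.cosh_pos t) h
    _ = |t| := Real.log_exp _

lemma int_Ioi : ∫ x in Ioi (0:ℝ), x * rexp (-x^2/2) = 1 := by
  have hd : ∀ x ∈ Ici (0:ℝ), HasDerivAt (fun y : ℝ => -rexp (-y^2/2)) (x * rexp (-x^2/2)) x := by
    intro x _
    have h1 : HasDerivAt (fun y : ℝ => -y^2/2) (-x) x := by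
      have := ((hasDerivAt_pow 2 x).neg.div_const 2)
      refine this.congr_deriv ?_
      ring
    have h2 := h1.exp.neg
    refine h2.congr_deriv ?_
    ring
  have hint : IntegrableOn (fun x : ℝ => x * rexp (-x^2/2)) (Ioi 0) := by
    have h := integrable_mul_exp_neg_mul_sq (b := (1:ℝ)/2) one_half_pos
    have : (fun x : ℝ => x * rexp (-x^2/2)) = fun x : ℝ => x * rexp (-(1/2) * x^2) := by
      funext x; ring_nf
    rw [this]
    exact h.integrableOn
  have htend : Tendsto (fun x : ℝ => -rexp (-x^2/2)) atTop (𝓝 0) := by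
    have h3 : Tendsto (fun x : ℝ => x^2/2) atTop atTop :=
      (tendsto_pow_atTop two_ne_zero).atTop_div_const (by norm_num)
    have h4 : Tendsto (fun x : ℝ => -x^2/2) atTop atBot := by
      have := tendsto_neg_atTop_atBot.comp h3
      simpa [Function.comp_def, neg_div] using this
    have h5 : Tendsto (fun x : ℝ => rexp (-x^2/2)) atTop (𝓝 0) :=
      Real.tendsto_exp_atBot.comp h4
    simpa using h5.neg
  have := integral_Ioi_of_hasDerivAt_of_tendsto' hd hint htend
  simpa using this

lemma pdf_eq (x : ℝ) : gaussianPDFReal 0 1 x = (Real.sqrt (2*π))⁻¹ * rexp (-x^2/2) := by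
  simp [gaussianPDFReal]

lemma key_integrable : Integrable (fun x : ℝ => gaussianPDFReal 0 1 x * |x|) volume := by
  have h := (integrable_mul_exp_neg_mul_sq (b := (1:ℝ)/2) one_half_pos).abs
  refine ((h.const_mul ((Real.sqrt (2*π))⁻¹)).congr ?_)
  refine ae_of_all _ fun x => ?_
  show (Real.sqrt (2*π))⁻¹ * |x * rexp (-(1/2) * x^2)| = gaussianPDFReal 0 1 x * |x|
  rw [pdf_eq, abs_mul, abs_of_pos (Real.exp_pos _)]
  ring_nf

lemma gauss_density (g : ℝ → ℝ) (hg : Measurable g) :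
    ∫ x, g x ∂(gaussianReal 0 1) = ∫ x, gaussianPDFReal 0 1 x * g x := by
  rw [gaussianReal_of_var_ne_zero _ one_ne_zero, gaussianPDF_def]
  rw [show (fun x => ENNReal.ofReal (gaussianPDFReal 0 1 x)) =
      fun x => ((Real.toNNReal (gaussianPDFReal 0 1 x) : ℝ≥0) : ℝ≥0∞) from rfl]
  rw [integral_withDensity_eq_integral_smul (measurable_gaussianPDFReal 0 1).real_toNNReal]
  congr 1
  funext x
  simp [NNReal.smul_def, Real.coe_toNNReal _ (gaussianPDFReal_nonneg 0 1 x)]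

lemma integrable_abs_gauss : Integrable (fun x : ℝ => |x|) (gaussianReal 0 1) := by
  rw [gaussianReal_of_var_ne_zero _ one_ne_zero, gaussianPDF_def]
  rw [show (fun x => ENNReal.ofReal (gaussianPDFReal 0 1 x)) =
      fun x => ((Real.toNNReal (gaussianPDFReal 0 1 x) : ℝ≥0) : ℝ≥0∞) from rfl]
  rw [integrable_withDensity_iff_integrable_smul (measurable_gaussianPDFReal 0 1).real_toNNReal]
  refine key_integrable.congr (ae_of_all _ fun x => ?_)
  simp [NNReal.smul_def, Real.coe_toNNReal _ (gaussianPDFReal_nonneg 0 1 x)]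

lemma integral_abs_gauss : ∫ x, |x| ∂(gaussianReal 0 1) = Real.sqrt (2/π) := by
  rw [gauss_density _ measurable_abs]
  have h1 : (fun x : ℝ => gaussianPDFReal 0 1 x * |x|) =
      fun x : ℝ => (Real.sqrt (2*π))⁻¹ * (|x| * rexp (-|x|^2/2)) := by
    funext x; rw [pdf_eq, sq_abs]; ring
  rw [h1, integral_const_mul,
    show (fun x : ℝ => |x| * rexp (-|x|^2/2)) = fun x : ℝ => (fun t : ℝ => t * rexp (-t^2/2)) |x|
      from rfl,
    integral_comp_abs (f := fun t : ℝ => t * rexp (-t^2/2)), int_Ioi]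
  rw [show Real.sqrt (2/π) = 2 / Real.sqrt (2*π) by
    rw [eq_div_iff (by positivity), ← Real.sqrt_mul (by positivity),
      show (2/π) * (2*π) = 2^2 by field_simp, Real.sqrt_sq two_pos.le]]
  ring


/-- For `N ≥ 2`, `β, v, b > 0`, `λ := β²v²/4` and
`k(λ) := sup_{q ∈ [0,1]} ( λ(1-(1-q)²) - ∫ ln cosh(x √(4λq)) dγ(x) )`:
if `βb < λ((N-1)/N - √(8/(πλ)))`, then `k(λ) - λ/N - ln cosh(βb) > 0`. -/
theorem stmt10 (N : ℕ) (hN : 2 ≤ N) (β v b : ℝ) (hβ : 0 < β) (hv : 0 < v) (hb : 0 < b)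
    (lam k : ℝ)
    (hlam : lam = β ^ 2 * v ^ 2 / 4)
    (hk : k = sSup ((fun q : ℝ => lam * (1 - (1 - q) ^ 2) -
        ∫ x, Real.log (Real.cosh (x * Real.sqrt (4 * lam * q))) ∂(gaussianReal 0 1)) ''
        Set.Icc 0 1))
    (hcond : β * b < lam * (((N : ℝ) - 1) / N - Real.sqrt (8 / (Real.pi * lam)))) :
    0 < k - lam / N - Real.log (Real.cosh (β * b)) := by
  have hlam0 : 0 < lam := by rw [hlam]; positivity
  have hπ : 0 < Real.pi := Real.pi_pos
  set f : ℝ → ℝ := fun q => lam * (1 - (1 - q) ^ 2) -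
      ∫ x, Real.log (Real.cosh (x * Real.sqrt (4 * lam * q))) ∂(gaussianReal 0 1) with hf
  have hbdd : BddAbove (f '' Set.Icc 0 1) := by
    refine ⟨lam, ?_⟩
    rintro y ⟨q, hq, rfl⟩
    have h1 : 0 ≤ ∫ x, Real.log (Real.cosh (x * Real.sqrt (4 * lam * q))) ∂(gaussianReal 0 1) :=
      integral_nonneg fun x => Real.log_nonneg (Real.one_le_cosh _)
    have h2 : lam * (1 - (1 - q) ^ 2) ≤ lam := by nlinarith [sq_nonneg (1 - q)]
    simp only [hf]
    linarith
  have hmem : f 1 ∈ f '' Set.Icc 0 1 := ⟨1, by norm_num, rfl⟩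
  have hk1 : f 1 ≤ k := by rw [hk]; exact le_csSup hbdd hmem
  -- estimate the integral at q = 1
  have hI : (∫ x, Real.log (Real.cosh (x * Real.sqrt (4 * lam * 1))) ∂(gaussianReal 0 1))
      ≤ lam * Real.sqrt (8 / (Real.pi * lam)) := by
    have hint : Integrable (fun x : ℝ => Real.sqrt (4 * lam) * |x|) (gaussianReal 0 1) :=
      integrable_abs_gauss.const_mul _
    have hle : ∀ x : ℝ, Real.log (Real.cosh (x * Real.sqrt (4 * lam * 1)))
        ≤ Real.sqrt (4 * lam) * |x| := by
      intro x
      refine (log_cosh_le_abs _).trans ?_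
      rw [abs_mul, abs_of_nonneg (Real.sqrt_nonneg _), mul_one (4 * lam)]
      ring_nf
      exact le_refl _
    calc (∫ x, Real.log (Real.cosh (x * Real.sqrt (4 * lam * 1))) ∂(gaussianReal 0 1))
        ≤ ∫ x, Real.sqrt (4 * lam) * |x| ∂(gaussianReal 0 1) :=
          integral_mono_of_nonneg
            (ae_of_all _ fun x => Real.log_nonneg (Real.one_le_cosh _)) hint (ae_of_all _ hle)
      _ = Real.sqrt (4 * lam) * Real.sqrt (2 / Real.pi) := by
          rw [integral_const_mul, integral_abs_gauss]
      _ = Real.sqrt (8 * lam / Real.pi) := by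
          rw [← Real.sqrt_mul (by positivity)]
          congr 1
          field_simp
          ring
      _ = lam * Real.sqrt (8 / (Real.pi * lam)) := by
          rw [show 8 * lam / Real.pi = lam ^ 2 * (8 / (Real.pi * lam)) by
            field_simp,
            Real.sqrt_mul (sq_nonneg lam), Real.sqrt_sq hlam0.le]
  have hf1 : lam - lam * Real.sqrt (8 / (Real.pi * lam)) ≤ f 1 := by
    simp only [hf]
    have : lam * (1 - (1 - 1 : ℝ) ^ 2) = lam := by ring
    rw [this]
    linarith
  have hlc : Real.log (Real.cosh (β * b)) ≤ β * b := by
    have := log_cosh_le_abs (β * b)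
    rwa [abs_of_pos (by positivity)] at this
  have hNpos : (0:ℝ) < N := by positivity
  have hfrac : lam * (((N : ℝ) - 1) / N) + lam / N = lam := by field_simp; ring
  rw [mul_sub] at hcond
  have hkk : lam - lam * Real.sqrt (8 / (Real.pi * lam)) ≤ k := le_trans hf1 hk1
  linarith [hkk, hlc, hcond, hfrac]
end
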